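/- Let F be an IMMF with accuracy ε and define Λ_i(a,b) = ∂_{b_i}c_F(a,b) · (c_F(a,b))⁻¹ (quaternionic inverse). If |c_F(a,b)| ≥ ε^ν for some ν ∈ (0,1/2), then |Λ_i(a,b) − ∂_{b_i}φ(b) n_{θ(b)}| ≤ ε^{1−ν} a (|R₂(a,b)| + a|R₁(a,b)||∇φ(b)|), where R₁, R₂ are the remainder bounds from the wavelet approximation of an IMMF. -/

import Mathlib

open MeasureTheory Quaternion
open scoped RealInnerProductSpace

noncomputable section

local notation "E2" => EuclideanSpace ℝ (Fin 2)

/-- Standard basis vector of `ℝ²`. -/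
def e2 (i : Fin 2) : EuclideanSpace ℝ (Fin 2) := EuclideanSpace.single i 1

/-- The pure unit Clifford quaternion `n_θ = cos θ i + sin θ j`. -/
def nQ (θ : ℝ) : ℍ[ℝ] := ⟨0, Real.cos θ, Real.sin θ, 0⟩

/-- The data `(A, θ, φ)` defines an Intrinsic Monogenic Mode Function
`F(x) = A(x) exp(φ(x) n_{θ(x)})` with accuracy `ε` and second-derivative bound `M`:
`A, θ ∈ C¹ ∩ L^∞`, `A > 0`, `φ ∈ C²` with first derivatives bounded away from `0` and `∞`
and second derivatives bounded by `M`, and `A, θ, ∇²φ` slowly varying with respect to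
`∇φ`. -/
def IsIMMF (A θ φ : EuclideanSpace ℝ (Fin 2) → ℝ) (ε M : ℝ) : Prop :=
  ContDiff ℝ 1 A ∧ ContDiff ℝ 1 θ ∧ ContDiff ℝ 2 φ ∧
  (∀ x, 0 < A x) ∧ (∃ C, ∀ x, |A x| ≤ C) ∧ (∃ C, ∀ x, |θ x| ≤ C) ∧
  (∃ c C : ℝ, 0 < c ∧ ∀ (x : EuclideanSpace ℝ (Fin 2)) (i : Fin 2),
      c ≤ |fderiv ℝ φ x (e2 i)| ∧ |fderiv ℝ φ x (e2 i)| ≤ C) ∧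
  (∀ (x : EuclideanSpace ℝ (Fin 2)) (i j : Fin 2),
      |fderiv ℝ (fun y => fderiv ℝ φ y (e2 j)) x (e2 i)| ≤ M) ∧
  (∀ (x : EuclideanSpace ℝ (Fin 2)) (i : Fin 2),
      |fderiv ℝ A x (e2 i)| ≤ ε * |fderiv ℝ φ x (e2 i)|) ∧
  (∀ (x : EuclideanSpace ℝ (Fin 2)) (i : Fin 2),
      |fderiv ℝ θ x (e2 i)| ≤ ε * |fderiv ℝ φ x (e2 i)|) ∧
  (∀ (x : EuclideanSpace ℝ (Fin 2)) (i j : Fin 2),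
      |fderiv ℝ (fun y => fderiv ℝ φ y (e2 j)) x (e2 i)| ≤ ε * ‖gradient φ x‖)

/-- The Intrinsic Monogenic Mode Function `F(x) = A(x) exp(φ(x) n_{θ(x)})`. -/
def IMMFfun (A θ φ : EuclideanSpace ℝ (Fin 2) → ℝ) (x : EuclideanSpace ℝ (Fin 2)) : ℍ[ℝ] :=
  A x • (((Real.cos (φ x) : ℝ) : ℍ[ℝ]) + Real.sin (φ x) • nQ (θ x))

/-- The wavelet transform `c_F(a,b)` of the quaternion-valued `F` against the
isotropic real wavelet `ψ`. -/
def cF (ψ : E2 → ℝ) (F : E2 → ℍ[ℝ]) (a : ℝ) (b : E2) : ℍ[ℝ] :=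
  ∫ x : E2, (a⁻¹ * ψ ((a⁻¹ : ℝ) • (x - b))) • F x

/-- Frequency estimation for an IMMF: with `Λ_i(a,b) = ∂_{b_i} c_F(a,b) (c_F(a,b))⁻¹`
(quaternionic inverse), if `|c_F(a,b)| ≥ ε^ν` with `ν ∈ (0,1/2)` and `R₁, R₂` are the
remainder bounds of the wavelet approximation of the IMMF, then
`|Λ_i(a,b) - ∂_{b_i}φ(b) n_{θ(b)}| ≤ ε^{1-ν} a (|R₂| + a |R₁| |∇φ(b)|)`. -/
theorem immf_frequency_estimate (A θ φ : E2 → ℝ) (ε M : ℝ) (hε : 0 < ε)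
    (hIMMF : IsIMMF A θ φ ε M)
    (ψ : E2 → ℝ) (Ψ : E2 → ℝ)
    (hψint : Integrable ψ)
    (hψC1 : ContDiff ℝ 1 ψ) (hψderivint : Integrable (fun x => ‖fderiv ℝ ψ x‖))
    (hψiso : ∀ ξ η : E2, ‖ξ‖ = ‖η‖ → ψ ξ = ψ η)
    (hΨ : ∀ ξ : E2, (Ψ ξ : ℂ) =
      (2 * Real.pi)⁻¹ * ∫ x : E2, (ψ x : ℂ) * Complex.exp (-Complex.I * (⟪ξ, x⟫ : ℝ)))
    (ν : ℝ) (hν : ν ∈ Set.Ioo (0 : ℝ) (1 / 2))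
    (a : ℝ) (ha : 0 < a) (b : E2) (R₁ R₂ : ℝ)
    (hR₁ : ‖cF ψ (IMMFfun A θ φ) a b
        - (a * Ψ (a • gradient φ b)) • IMMFfun A θ φ b‖ ≤ ε * a ^ 2 * |R₁|)
    (hR₂ : ∀ i : Fin 2,
      ‖fderiv ℝ (fun b' => cF ψ (IMMFfun A θ φ) a b') b (e2 i)
          - fderiv ℝ φ b (e2 i) •
              (nQ (θ b) * ((a * Ψ (a • gradient φ b)) • IMMFfun A θ φ b))‖ ≤
        ε * a * |R₂|)
    (hlow : ε ^ ν ≤ ‖cF ψ (IMMFfun A θ φ) a b‖) :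
    ∀ i : Fin 2,
      ‖fderiv ℝ (fun b' => cF ψ (IMMFfun A θ φ) a b') b (e2 i) *
            (cF ψ (IMMFfun A θ φ) a b)⁻¹
          - fderiv ℝ φ b (e2 i) • nQ (θ b)‖ ≤
        ε ^ (1 - ν) * a * (|R₂| + a * |R₁| * ‖gradient φ b‖) := by
  intro i
  set c : ℍ[ℝ] := cF ψ (IMMFfun A θ φ) a b with hc
  set D : ℍ[ℝ] := fderiv ℝ (fun b' => cF ψ (IMMFfun A θ φ) a b') b (e2 i) with hD
  set B : ℍ[ℝ] := (a * Ψ (a • gradient φ b)) • IMMFfun A θ φ b with hB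
  set n : ℍ[ℝ] := nQ (θ b) with hn
  set p : ℝ := fderiv ℝ φ b (e2 i) with hp
  have hεν : (0:ℝ) < ε ^ ν := Real.rpow_pos_of_pos hε ν
  have hc0 : c ≠ 0 := by
    intro h
    rw [h, norm_zero] at hlow
    exact absurd hlow (not_le.mpr hεν)
  have hnorm1 : ‖n‖ = 1 := by
    have h2 : ‖n‖ * ‖n‖ = 1 := by
      rw [← Quaternion.normSq_eq_norm_mul_self]
      show Quaternion.normSq (nQ (θ b)) = 1
      rw [Quaternion.normSq_def']
      simp [nQ]
    nlinarith [norm_nonneg n]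
  have hpgrad : |p| ≤ ‖gradient φ b‖ := by
    have : p = ⟪gradient φ b, e2 i⟫ := by
      rw [hp]
      exact (InnerProductSpace.toDual_symm_apply).symm
    rw [this]
    calc |⟪gradient φ b, e2 i⟫| ≤ ‖gradient φ b‖ * ‖e2 i‖ := abs_real_inner_le_norm _ _
      _ = ‖gradient φ b‖ := by
          rw [show ‖e2 i‖ = 1 by simp [e2, EuclideanSpace.norm_single]]; ring
  have key : D * c⁻¹ - p • n = (D - p • (n * c)) * c⁻¹ := by
    rw [sub_mul, smul_mul_assoc, mul_assoc, mul_inv_cancel₀ hc0, mul_one]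
  rw [key]
  have hsplit : ‖D - p • (n * c)‖ ≤ ε * a * |R₂| + |p| * ‖B - c‖ := by
    have : D - p • (n * c) = (D - p • (n * B)) + p • (n * (B - c)) := by
      rw [mul_sub]; simp [smul_sub]
    rw [this]
    calc ‖(D - p • (n * B)) + p • (n * (B - c))‖
        ≤ ‖D - p • (n * B)‖ + ‖p • (n * (B - c))‖ := norm_add_le _ _
      _ ≤ ε * a * |R₂| + |p| * ‖B - c‖ := by
          refine add_le_add (hR₂ i) ?_
          rw [norm_smul, Real.norm_eq_abs]
          calc |p| * ‖n * (B - c)‖ ≤ |p| * (‖n‖ * ‖B - c‖) :=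
                mul_le_mul_of_nonneg_left (norm_mul_le _ _) (abs_nonneg p)
            _ = |p| * ‖B - c‖ := by rw [hnorm1, one_mul]
  have hBc : ‖B - c‖ ≤ ε * a ^ 2 * |R₁| := by rwa [norm_sub_rev]
  have hcinv : ‖c⁻¹‖ ≤ (ε ^ ν)⁻¹ := by
    rw [norm_inv]
    exact inv_anti₀ hεν hlow
  have hr : ε ^ (1 - ν) = ε * (ε ^ ν)⁻¹ := by
    rw [Real.rpow_sub hε, Real.rpow_one, div_eq_mul_inv]
  calc ‖(D - p • (n * c)) * c⁻¹‖ ≤ ‖D - p • (n * c)‖ * ‖c⁻¹‖ := norm_mul_le _ _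
    _ ≤ (ε * a * |R₂| + |p| * ‖B - c‖) * (ε ^ ν)⁻¹ := by
        apply mul_le_mul hsplit hcinv (norm_nonneg _)
        positivity
    _ ≤ (ε * a * |R₂| + ‖gradient φ b‖ * (ε * a ^ 2 * |R₁|)) * (ε ^ ν)⁻¹ := by
        have h3 : |p| * ‖B - c‖ ≤ ‖gradient φ b‖ * (ε * a ^ 2 * |R₁|) :=
          mul_le_mul hpgrad hBc (norm_nonneg _) (norm_nonneg _)
        apply mul_le_mul_of_nonneg_right (add_le_add (le_refl _) h3) (by positivity)
    _ = ε ^ (1 - ν) * a * (|R₂| + a * |R₁| * ‖gradient φ b‖) := by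
        rw [hr]; ring

end
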